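/- arXiv:2302.09704 — 2 statements merged into one kernel-verified Lean document; each statement's English description precedes it below -/
import Mathlib

section
/- Certificate with hull geometry: let A = conv(∪_{i∈[m]} A⁽ⁱ⁾) and B = conv(∪_{j∈[k]} B⁽ʲ⁾) with each A⁽ⁱ⁾, B⁽ʲ⁾ nonempty compact convex, let R, S be linear isometries and p, d ∈ ℝⁿ. Then sd(R·A + p, S·B + d) ≥ γ if and only if there exist c ∈ ℝⁿ with ‖c‖=1 and α, β ∈ ℝ such that α ≤ μ_{A⁽ⁱ⁾}(Rᵀc) for all i, β ≥ σ_{B⁽ʲ⁾}(Sᵀc) for all j, and γ ≤ α − β + ⟪c, p − d⟫. -/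
set_option maxHeartbeats 1000000

open scoped RealInnerProductSpace Pointwise

noncomputable def costFn {n : ℕ} (C : Set (EuclideanSpace ℝ (Fin n)))
    (c : EuclideanSpace ℝ (Fin n)) : ℝ :=
  sInf ((fun x => ⟪c, x⟫) '' C)

noncomputable def suppFn {n : ℕ} (T : Set (EuclideanSpace ℝ (Fin n)))
    (c : EuclideanSpace ℝ (Fin n)) : ℝ :=
  sSup ((fun x => ⟪c, x⟫) '' T)

open Classical in
noncomputable def sd {n : ℕ} (C D : Set (EuclideanSpace ℝ (Fin n))) : ℝ :=
  if Disjoint C D then sInf {r | ∃ x ∈ C, ∃ y ∈ D, r = ‖x - y‖}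
  else - sInf {r | ∃ t : EuclideanSpace ℝ (Fin n), ‖t‖ = r ∧ Disjoint ((· + t) '' C) D}

section AuxLemmas
variable {n : ℕ}
local notation "E" => EuclideanSpace ℝ (Fin n)

lemma inner_cont (c : E) : Continuous (fun x : E => ⟪c, x⟫) :=
  continuous_const.inner continuous_id

lemma costFn_le {C : Set E} (hC : IsCompact C) {c x : E} (hx : x ∈ C) : costFn C c ≤ ⟪c, x⟫ :=
  csInf_le ((hC.image (inner_cont c)).bddBelow) ⟨x, hx, rfl⟩

lemma le_costFn {C : Set E} (hne : C.Nonempty) {c : E} {a : ℝ}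
    (h : ∀ x ∈ C, a ≤ ⟪c, x⟫) : a ≤ costFn C c :=
  le_csInf (hne.image _) (by rintro r ⟨x, hx, rfl⟩; exact h x hx)

lemma le_suppFn {C : Set E} (hC : IsCompact C) {c x : E} (hx : x ∈ C) : ⟪c, x⟫ ≤ suppFn C c :=
  le_csSup ((hC.image (inner_cont c)).bddAbove) ⟨x, hx, rfl⟩

lemma suppFn_le {C : Set E} (hne : C.Nonempty) {c : E} {a : ℝ}
    (h : ∀ x ∈ C, ⟪c, x⟫ ≤ a) : suppFn C c ≤ a :=
  csSup_le (hne.image _) (by rintro r ⟨x, hx, rfl⟩; exact h x hx)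

lemma isCompact_sub' {X Y : Set E} (hXc : IsCompact X) (hYc : IsCompact Y) :
    IsCompact (X - Y) := by
  have h : X - Y = (fun q : E × E => q.1 - q.2) '' (X ×ˢ Y) := by
    ext z; simp [Set.mem_sub, Set.mem_image, Set.mem_prod, Prod.exists]
  rw [h]; exact (hXc.prod hYc).image (continuous_fst.sub continuous_snd)

lemma costFn_sub {X Y : Set E} (hXne : X.Nonempty) (hYne : Y.Nonempty)
    (hXc : IsCompact X) (hYc : IsCompact Y) (c : E) :
    costFn (X - Y) c = costFn X c - suppFn Y c := by
  have hKne : (X - Y).Nonempty := hXne.sub hYne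
  apply le_antisymm
  · have h1 : ∀ y ∈ Y, costFn (X - Y) c + ⟪c, y⟫ ≤ costFn X c := by
      intro y hy
      apply le_costFn hXne
      intro x hx
      have h2 : costFn (X - Y) c ≤ ⟪c, x - y⟫ :=
        csInf_le (((isCompact_sub' hXc hYc).image (inner_cont c)).bddBelow) ⟨x - y, Set.sub_mem_sub hx hy, rfl⟩
      rw [inner_sub_right] at h2
      linarith
    have h3 : suppFn Y c ≤ costFn X c - costFn (X - Y) c := by
      apply suppFn_le hYne
      intro y hy
      linarith [h1 y hy]
    linarith
  · apply le_costFn hKne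
    rintro z hz
    obtain ⟨x, hx, y, hy, rfl⟩ := Set.mem_sub.mp hz
    rw [inner_sub_right]
    linarith [costFn_le hXc hx (c := c), le_suppFn hYc hy (c := c)]

lemma continuous_costFn {K : Set E} (hKc : IsCompact K) (hKne : K.Nonempty) :
    Continuous (fun c : E => costFn K c) := by
  obtain ⟨Rb, hRb⟩ := isBounded_iff_forall_norm_le.mp hKc.isBounded
  have hRb0 : 0 ≤ Rb := le_trans (norm_nonneg _) (hRb _ hKne.some_mem)
  have key : ∀ c c' : E, costFn K c ≤ costFn K c' + Rb * ‖c - c'‖ := by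
    intro c c'
    have h : ∀ z ∈ K, costFn K c - Rb * ‖c - c'‖ ≤ ⟪c', z⟫ := by
      intro z hz
      have h1 := costFn_le hKc hz (c := c)
      have h2 : ⟪c - c', z⟫ ≤ ‖c - c'‖ * ‖z‖ := real_inner_le_norm _ _
      rw [inner_sub_left] at h2
      have h4 : ‖c - c'‖ * ‖z‖ ≤ ‖c - c'‖ * Rb :=
        mul_le_mul_of_nonneg_left (hRb z hz) (norm_nonneg _)
      nlinarith
    linarith [le_costFn hKne h]
  apply LipschitzWith.continuous (K := Real.toNNReal Rb)
  apply LipschitzWith.of_dist_le_mul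
  intro c c'
  rw [Real.dist_eq, dist_eq_norm, Real.coe_toNNReal Rb hRb0]
  rw [abs_sub_le_iff]
  constructor
  · linarith [key c c']
  · linarith [key c' c, norm_sub_rev c c' ▸ key c' c]

lemma exists_sep {X Y : Set E} (hXne : X.Nonempty) (hYne : Y.Nonempty) (hXc : IsCompact X)
    (hYc : IsCompact Y) (hXv : Convex ℝ X) (hYv : Convex ℝ Y) (hd : Disjoint X Y) :
    ∃ c : E, ‖c‖ = 1 ∧ ∃ δ : ℝ, 0 < δ ∧ (∀ x ∈ X, ∀ y ∈ Y, ⟪c, y⟫ + δ ≤ ⟪c, x⟫) ∧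
      (∀ x ∈ X, ∀ y ∈ Y, δ ≤ ‖x - y‖) ∧ (∃ x ∈ X, ∃ y ∈ Y, δ = ‖x - y‖) := by
  have hKc : IsCompact (X - Y) := by
    have h : X - Y = (fun q : E × E => q.1 - q.2) '' (X ×ˢ Y) := by
      ext z; simp [Set.mem_sub, Set.mem_image, Set.mem_prod, Prod.exists]
    rw [h]; exact (hXc.prod hYc).image (continuous_fst.sub continuous_snd)
  have hKv : Convex ℝ (X - Y) := hXv.sub hYv
  obtain ⟨x₁, hx₁⟩ := hXne
  obtain ⟨y₁, hy₁⟩ := hYne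
  have hKne : (X - Y).Nonempty := ⟨x₁ - y₁, Set.sub_mem_sub hx₁ hy₁⟩
  obtain ⟨v, hvK, hvmin⟩ := hKc.exists_isMinOn hKne continuous_norm.continuousOn
  have hv0 : v ≠ 0 := by
    rintro rfl
    obtain ⟨x, hx, y, hy, hxy⟩ := Set.mem_sub.mp hvK
    exact Set.disjoint_left.mp hd hx (by rw [sub_eq_zero] at hxy; rwa [hxy])
  have hvpos : 0 < ‖v‖ := norm_pos_iff.mpr hv0
  haveI := hKne.to_subtype
  have hiInf : ‖(0:E) - v‖ = ⨅ w : (X - Y), ‖(0:E) - (w:E)‖ := by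
    apply le_antisymm
    · apply le_ciInf
      intro w
      simpa using hvmin w.2
    · have hbdd : BddBelow (Set.range fun w : ↥(X - Y) => ‖(0:E) - (w:E)‖) := by
        refine ⟨0, ?_⟩
        rintro r ⟨w, rfl⟩
        positivity
      exact ciInf_le hbdd ⟨v, hvK⟩
  have hvar := (norm_eq_iInf_iff_real_inner_le_zero hKv hvK).mp hiInf
  have key : ∀ w ∈ X - Y, ‖v‖ ^ 2 ≤ ⟪v, w⟫ := by
    intro w hw
    have h1 : ⟪(0:E) - v, w - v⟫ ≤ 0 := hvar w hw
    rw [zero_sub, inner_neg_left, neg_nonpos, inner_sub_right] at h1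
    have h2 : ⟪v, v⟫ = ‖v‖ ^ 2 := real_inner_self_eq_norm_sq v
    linarith
  refine ⟨‖v‖⁻¹ • v, ?_, ‖v‖, hvpos, ?_, ?_, ?_⟩
  · rw [norm_smul, norm_inv, norm_norm, inv_mul_cancel₀ (ne_of_gt hvpos)]
  · intro x hx y hy
    have hk := key _ (Set.sub_mem_sub hx hy)
    have h3 : ⟪‖v‖⁻¹ • v, x - y⟫ = ‖v‖⁻¹ * ⟪v, x - y⟫ := real_inner_smul_left _ _ _
    have h4 : ‖v‖⁻¹ * ‖v‖ ^ 2 ≤ ‖v‖⁻¹ * ⟪v, x - y⟫ :=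
      mul_le_mul_of_nonneg_left hk (by positivity)
    have h5 : ‖v‖⁻¹ * ‖v‖ ^ 2 = ‖v‖ := by field_simp [sq]
    rw [inner_sub_right] at h3
    linarith
  · intro x hx y hy
    exact hvmin (Set.sub_mem_sub hx hy)
  · obtain ⟨x, hx, y, hy, hxy⟩ := Set.mem_sub.mp hvK
    exact ⟨x, hx, y, hy, by rw [← hxy]⟩

lemma isCompact_convexHull_iUnion {m : ℕ} (A : Fin m → Set E)
    (hA : ∀ i, (A i).Nonempty) (hAc : ∀ i, IsCompact (A i)) (hAv : ∀ i, Convex ℝ (A i)) :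
    IsCompact (convexHull ℝ (⋃ i, A i)) := by
  set D := (fun q : (Fin m → ℝ) × (Fin m → EuclideanSpace ℝ (Fin n)) => ∑ i, q.1 i • q.2 i) ''
    ((stdSimplex ℝ (Fin m)) ×ˢ Set.univ.pi A) with hD_def
  have hDcomp : IsCompact D := by
    apply IsCompact.image ((isCompact_stdSimplex (𝕜 := ℝ) (ι := Fin m)).prod (isCompact_univ_pi hAc))
    exact continuous_finset_sum _ fun i _ =>
      ((continuous_apply i).comp continuous_fst).smul ((continuous_apply i).comp continuous_snd)
  have hEq : convexHull ℝ (⋃ i, A i) = D := by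
    apply Set.Subset.antisymm
    · apply convexHull_min
      · rintro x hx
        rw [Set.mem_iUnion] at hx
        obtain ⟨i, hi⟩ := hx
        refine ⟨⟨fun j => if j = i then 1 else 0, fun j => if h : j = i then x else (hA j).some⟩,
          ⟨⟨fun j => by dsimp only; split <;> norm_num, by simp⟩, ?_⟩, ?_⟩
        · intro j _
          dsimp only
          split
          · subst ‹j = i›; exact hi
          · exact (hA j).some_mem
        · dsimp only
          rw [Finset.sum_eq_single i]
          · simp
          · intro j _ hj; simp [hj]
          · simp
      · rintro x ⟨⟨w, a⟩, ⟨hw, ha⟩, rfl⟩ y ⟨⟨w', a'⟩, ⟨hw', ha'⟩, rfl⟩ θ₁ θ₂ hθ₁ hθ₂ hθ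
        classical
        set u : Fin m → ℝ := fun j => θ₁ * w j + θ₂ * w' j with hu_def
        have hu0 : ∀ j, 0 ≤ u j := fun j => by
          have := hw.1 j; have := hw'.1 j; positivity
        set b : Fin m → EuclideanSpace ℝ (Fin n) := fun j =>
          if h : u j = 0 then (hA j).some
          else (u j)⁻¹ • ((θ₁ * w j) • a j + (θ₂ * w' j) • a' j) with hb_def
        refine ⟨⟨u, b⟩, ⟨⟨hu0, ?_⟩, ?_⟩, ?_⟩
        · simp only [hu_def, Finset.sum_add_distrib, ← Finset.mul_sum, hw.2, hw'.2]
          simpa using hθ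
        · intro j _
          show b j ∈ A j
          by_cases h : u j = 0
          · have hb : b j = (hA j).some := by simp only [hb_def]; rw [dif_pos h]
            rw [hb]
            exact (hA j).some_mem
          · have hb : b j = (u j)⁻¹ • ((θ₁ * w j) • a j + (θ₂ * w' j) • a' j) := by
              simp only [hb_def]; rw [dif_neg h]
            rw [hb]
            have huj : 0 < u j := lt_of_le_of_ne (hu0 j) (Ne.symm h)
            have hc1 : (0:ℝ) ≤ θ₁ * w j / u j := by
              have := hw.1 j; positivity
            have hc2 : (0:ℝ) ≤ θ₂ * w' j / u j := by
              have := hw'.1 j; positivity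
            have hcs : θ₁ * w j / u j + θ₂ * w' j / u j = 1 := by
              field_simp [hu_def]
              rfl
            have hmem := hAv j (ha j (Set.mem_univ j)) (ha' j (Set.mem_univ j)) hc1 hc2 hcs
            convert hmem using 1
            rw [smul_add, smul_smul, smul_smul]
            congr 1 <;> rw [div_eq_inv_mul]
        · dsimp only
          have hterm : ∀ j, u j • b j = (θ₁ * w j) • a j + (θ₂ * w' j) • a' j := by
            intro j
            by_cases h : u j = 0
            · have h1 : θ₁ * w j = 0 ∧ θ₂ * w' j = 0 := by
                have hq : θ₁ * w j + θ₂ * w' j = 0 := h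
                constructor <;> nlinarith [mul_nonneg hθ₁ (hw.1 j), mul_nonneg hθ₂ (hw'.1 j)]
              rw [show u j = 0 from h, h1.1, h1.2]
              simp
            · have hb : b j = (u j)⁻¹ • ((θ₁ * w j) • a j + (θ₂ * w' j) • a' j) := by
                simp only [hb_def]; rw [dif_neg h]
              rw [hb, smul_smul, mul_inv_cancel₀ h, one_smul]
          calc ∑ j, u j • b j = ∑ j, ((θ₁ * w j) • a j + (θ₂ * w' j) • a' j) := by
                exact Finset.sum_congr rfl fun j _ => hterm j
            _ = θ₁ • ∑ j, w j • a j + θ₂ • ∑ j, w' j • a' j := by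
                rw [Finset.sum_add_distrib, Finset.smul_sum, Finset.smul_sum]
                congr 1 <;> exact Finset.sum_congr rfl fun j _ => by rw [smul_smul]
    · rintro x ⟨⟨w, a⟩, ⟨hw, ha⟩, rfl⟩
      have := Finset.centerMass_mem_convexHull (t := Finset.univ) (w := w) (z := a)
        (s := ⋃ i, A i) (fun i _ => hw.1 i) (by rw [hw.2]; norm_num)
        (fun i _ => Set.mem_iUnion.mpr ⟨i, ha i (Set.mem_univ i)⟩)
      simpa [Finset.centerMass, hw.2] using this
  rw [hEq]
  exact hDcomp

lemma inner_iso (R : EuclideanSpace ℝ (Fin n) ≃ₗᵢ[ℝ] EuclideanSpace ℝ (Fin n)) (c x : E) :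
    ⟪c, R x⟫ = ⟪R.symm c, x⟫ := by
  conv_lhs => rw [← R.apply_symm_apply c]
  exact R.inner_map_map _ _

lemma costFn_image (R : EuclideanSpace ℝ (Fin n) ≃ₗᵢ[ℝ] EuclideanSpace ℝ (Fin n)) (p : E)
    {C : Set E} (hCne : C.Nonempty) (hCc : IsCompact C) (c : E) :
    costFn ((fun x => R x + p) '' C) c = costFn C (R.symm c) + ⟪c, p⟫ := by
  have himg : (fun x : E => ⟪c, x⟫) '' ((fun x => R x + p) '' C)
      = (fun r => r + ⟪c, p⟫) '' ((fun x : E => ⟪R.symm c, x⟫) '' C) := by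
    rw [← Set.image_comp, ← Set.image_comp]
    apply Set.image_congr
    intro x _
    simp only [Function.comp]
    rw [inner_add_right, inner_iso]
  rw [costFn, himg]
  rw [← Monotone.map_csInf_of_continuousAt (f := fun r : ℝ => r + ⟪c, p⟫)
    ((continuous_add_right _).continuousAt) (monotone_id.add_const _)
    (hCne.image _) ((hCc.image (inner_cont (R.symm c))).bddBelow)]
  rfl

lemma suppFn_image (S : EuclideanSpace ℝ (Fin n) ≃ₗᵢ[ℝ] EuclideanSpace ℝ (Fin n)) (p : E)
    {C : Set E} (hCne : C.Nonempty) (hCc : IsCompact C) (c : E) :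
    suppFn ((fun x => S x + p) '' C) c = suppFn C (S.symm c) + ⟪c, p⟫ := by
  have himg : (fun x : E => ⟪c, x⟫) '' ((fun x => S x + p) '' C)
      = (fun r => r + ⟪c, p⟫) '' ((fun x : E => ⟪S.symm c, x⟫) '' C) := by
    rw [← Set.image_comp, ← Set.image_comp]
    apply Set.image_congr
    intro x _
    simp only [Function.comp]
    rw [inner_add_right, inner_iso]
  rw [suppFn, himg]
  rw [← Monotone.map_csSup_of_continuousAt (f := fun r : ℝ => r + ⟪c, p⟫)
    ((continuous_add_right _).continuousAt) (monotone_id.add_const _)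
    (hCne.image _) ((hCc.image (inner_cont (S.symm c))).bddAbove)]
  rfl

lemma hull_cost {m : ℕ} (hm : 0 < m) (A : Fin m → Set E) (hA : ∀ i, (A i).Nonempty)
    (hAc : ∀ i, IsCompact (A i)) (hHc : IsCompact (convexHull ℝ (⋃ i, A i))) (u : E) (α : ℝ) :
    (∀ i, α ≤ costFn (A i) u) ↔ α ≤ costFn (convexHull ℝ (⋃ i, A i)) u := by
  have hHne : (convexHull ℝ (⋃ i, A i)).Nonempty :=
    ⟨(hA ⟨0, hm⟩).some, subset_convexHull ℝ _ (Set.mem_iUnion.mpr ⟨⟨0, hm⟩, (hA _).some_mem⟩)⟩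
  constructor
  · intro h
    apply le_costFn hHne
    intro x hx
    have hsub : convexHull ℝ (⋃ i, A i) ⊆ {w : E | α ≤ ⟪u, w⟫} := by
      apply convexHull_min
      · rintro w hw
        rw [Set.mem_iUnion] at hw
        obtain ⟨i, hi⟩ := hw
        exact le_trans (h i) (costFn_le (hAc i) hi)
      · exact convex_halfSpace_ge
          ⟨fun a b => inner_add_right u a b, fun r a => real_inner_smul_right u a r⟩ α
    exact hsub hx
  · intro h i
    refine le_trans h (le_costFn (hA i) ?_)
    intro x hx
    exact costFn_le hHc (subset_convexHull ℝ _ (Set.mem_iUnion.mpr ⟨i, hx⟩))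

lemma hull_supp {m : ℕ} (hm : 0 < m) (B : Fin m → Set E) (hB : ∀ i, (B i).Nonempty)
    (hBc : ∀ i, IsCompact (B i)) (hHc : IsCompact (convexHull ℝ (⋃ i, B i))) (u : E) (β : ℝ) :
    (∀ i, suppFn (B i) u ≤ β) ↔ suppFn (convexHull ℝ (⋃ i, B i)) u ≤ β := by
  have hHne : (convexHull ℝ (⋃ i, B i)).Nonempty :=
    ⟨(hB ⟨0, hm⟩).some, subset_convexHull ℝ _ (Set.mem_iUnion.mpr ⟨⟨0, hm⟩, (hB _).some_mem⟩)⟩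
  constructor
  · intro h
    apply suppFn_le hHne
    intro x hx
    have hsub : convexHull ℝ (⋃ i, B i) ⊆ {w : E | ⟪u, w⟫ ≤ β} := by
      apply convexHull_min
      · rintro w hw
        rw [Set.mem_iUnion] at hw
        obtain ⟨i, hi⟩ := hw
        exact le_trans (le_suppFn (hBc i) hi) (h i)
      · exact convex_halfSpace_le
          ⟨fun a b => inner_add_right u a b, fun r a => real_inner_smul_right u a r⟩ β
    exact hsub hx
  · intro h i
    refine le_trans (suppFn_le (hB i) ?_) h
    intro x hx
    exact le_suppFn hHc (subset_convexHull ℝ _ (Set.mem_iUnion.mpr ⟨i, hx⟩))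

lemma sd_ge_iff (hn : 0 < n) {X Y : Set E} (hXne : X.Nonempty) (hYne : Y.Nonempty)
    (hXc : IsCompact X) (hYc : IsCompact Y) (hXv : Convex ℝ X) (hYv : Convex ℝ Y) (γ : ℝ) :
    sd X Y ≥ γ ↔ ∃ c : E, ‖c‖ = 1 ∧ γ ≤ costFn X c - suppFn Y c := by
  set e : E := EuclideanSpace.single (⟨0, hn⟩ : Fin n) (1 : ℝ) with he_def
  have he : ‖e‖ = 1 := by rw [he_def, EuclideanSpace.norm_single]; norm_num
  by_cases hd : Disjoint X Y
  · rw [sd, if_pos hd]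
    constructor
    · intro hγ
      obtain ⟨c, hc1, δ, hδpos, hsep, hlow, x₀, hx₀, y₀, hy₀, hδeq⟩ :=
        exists_sep hXne hYne hXc hYc hXv hYv hd
      refine ⟨c, hc1, ?_⟩
      have hb : BddBelow {r | ∃ x ∈ X, ∃ y ∈ Y, r = ‖x - y‖} := by
        refine ⟨0, ?_⟩
        rintro r ⟨x, hx, y, hy, rfl⟩
        positivity
      have h1 : sInf {r | ∃ x ∈ X, ∃ y ∈ Y, r = ‖x - y‖} ≤ δ :=
        csInf_le hb ⟨x₀, hx₀, y₀, hy₀, hδeq⟩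
      have h2 : suppFn Y c ≤ costFn X c - δ := by
        apply suppFn_le hYne
        intro y hy
        have h3 : ⟪c, y⟫ + δ ≤ costFn X c := le_costFn hXne (fun x hx => hsep x hx y hy)
        linarith
      linarith
    · rintro ⟨c, hc1, hγ⟩
      apply le_csInf
      · obtain ⟨x, hx⟩ := hXne
        obtain ⟨y, hy⟩ := hYne
        exact ⟨‖x - y‖, x, hx, y, hy, rfl⟩
      · rintro r ⟨x, hx, y, hy, rfl⟩
        have h1 : ⟪c, x - y⟫ ≤ ‖x - y‖ := by
          have := real_inner_le_norm c (x - y)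
          rwa [hc1, one_mul] at this
        rw [inner_sub_right] at h1
        linarith [costFn_le hXc hx (c := c), le_suppFn hYc hy (c := c)]
  · rw [sd, if_neg hd]
    obtain ⟨z, hzX, hzY⟩ := Set.not_disjoint_iff.mp hd
    have hTbdd : BddBelow {r | ∃ t : E, ‖t‖ = r ∧ Disjoint ((· + t) '' X) Y} := by
      refine ⟨0, ?_⟩
      rintro r ⟨t, rfl, -⟩
      positivity
    have hTne : {r | ∃ t : E, ‖t‖ = r ∧ Disjoint ((· + t) '' X) Y}.Nonempty := by
      obtain ⟨R1, hR1⟩ := isBounded_iff_forall_norm_le.mp hXc.isBounded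
      obtain ⟨R2, hR2⟩ := isBounded_iff_forall_norm_le.mp hYc.isBounded
      have hR10 : 0 ≤ R1 := le_trans (norm_nonneg _) (hR1 _ hzX)
      have hR20 : 0 ≤ R2 := le_trans (norm_nonneg _) (hR2 _ hzY)
      refine ⟨‖(R1 + R2 + 1) • e‖, (R1 + R2 + 1) • e, rfl, ?_⟩
      rw [Set.disjoint_left]
      rintro a ⟨x, hx, rfl⟩ ha
      have h1 : ‖(R1 + R2 + 1) • e‖ = R1 + R2 + 1 := by
        rw [norm_smul, he, mul_one, Real.norm_eq_abs, abs_of_pos (by linarith)]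
      have h2 : ‖x + (R1 + R2 + 1) • e‖ ≥ ‖(R1 + R2 + 1) • e‖ - ‖x‖ := by
        have h := norm_sub_norm_le ((R1 + R2 + 1) • e) (-x)
        simp only [sub_neg_eq_add, norm_neg] at h
        have h' : (R1 + R2 + 1) • e + x = x + (R1 + R2 + 1) • e := add_comm _ _
        rw [h'] at h
        linarith
      have h3 := hR2 _ ha
      have h4 := hR1 _ hx
      rw [h1] at h2
      linarith
    constructor
    · intro hγ
      have hKc : IsCompact (X - Y) := isCompact_sub' hXc hYc
      have hKne : (X - Y).Nonempty := hXne.sub hYne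
      obtain ⟨c, hcs, hcmax⟩ := (isCompact_sphere (0 : E) 1).exists_isMaxOn
        ⟨e, by simpa using he⟩ (continuous_costFn hKc hKne).continuousOn
      have hc1 : ‖c‖ = 1 := by simpa using hcs
      refine ⟨c, hc1, ?_⟩
      rw [← costFn_sub hXne hYne hXc hYc]
      have hb : ∀ r ∈ {r | ∃ t : E, ‖t‖ = r ∧ Disjoint ((· + t) '' X) Y},
          - costFn (X - Y) c ≤ r := by
        rintro r ⟨t, rfl, hdis⟩
        have hX'ne : ((· + t) '' X).Nonempty := hXne.image _
        have hX'c : IsCompact ((· + t) '' X) := hXc.image (continuous_id.add continuous_const)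
        have hX'v : Convex ℝ ((· + t) '' X) := by
          have h : ((· + t) '' X) = (fun z => t + z) '' X := by
            apply Set.image_congr
            intro x _
            exact add_comm x t
          rw [h]
          exact hXv.translate t
        obtain ⟨c', hc'1, δ, hδ, hsep, -, -⟩ := exists_sep hX'ne hYne hX'c hYc hX'v hYv hdis
        have hgc' : δ - ‖t‖ ≤ costFn (X - Y) c' := by
          apply le_costFn hKne
          rintro w hw
          obtain ⟨x, hx, y, hy, rfl⟩ := Set.mem_sub.mp hw
          have h1 := hsep (x + t) ⟨x, hx, rfl⟩ y hy
          have h2 : ⟪c', t⟫ ≤ ‖t‖ := by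
            have := real_inner_le_norm c' t
            rwa [hc'1, one_mul] at this
          rw [inner_add_right] at h1
          rw [inner_sub_right]
          linarith
        have h3 : costFn (X - Y) c' ≤ costFn (X - Y) c := hcmax (by simpa using hc'1)
        linarith
      have h2 : - costFn (X - Y) c ≤ sInf {r | ∃ t : E, ‖t‖ = r ∧ Disjoint ((· + t) '' X) Y} :=
        le_csInf hTne hb
      linarith
    · rintro ⟨c, hc1, hγ⟩
      have hγ0 : γ ≤ 0 := by
        linarith [costFn_le hXc hzX (c := c), le_suppFn hYc hzY (c := c)]
      have hkey : ∀ ε > 0, sInf {r | ∃ t : E, ‖t‖ = r ∧ Disjoint ((· + t) '' X) Y} ≤ -γ + ε := by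
        intro ε hε
        apply csInf_le hTbdd
        refine ⟨(-γ + ε) • c, ?_, ?_⟩
        · rw [norm_smul, hc1, mul_one, Real.norm_eq_abs, abs_of_pos (by linarith)]
        · rw [Set.disjoint_left]
          rintro a ⟨x, hx, rfl⟩ ha
          have h1 := costFn_le hXc hx (c := c)
          have h2 := le_suppFn hYc ha (c := c)
          rw [inner_add_right, real_inner_smul_right] at h2
          have h3 : ⟪c, c⟫ = 1 := by
            rw [real_inner_self_eq_norm_sq, hc1]; norm_num
          rw [h3, mul_one] at h2
          linarith
      have h4 : sInf {r | ∃ t : E, ‖t‖ = r ∧ Disjoint ((· + t) '' X) Y} ≤ -γ :=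
        le_of_forall_pos_le_add (by intro ε hε; linarith [hkey ε hε])
      linarith

end AuxLemmas

theorem sd_ge_iff_hull_certificate {n m k : ℕ} (hn : 0 < n) (hm : 0 < m) (hk : 0 < k)
    (A : Fin m → Set (EuclideanSpace ℝ (Fin n))) (B : Fin k → Set (EuclideanSpace ℝ (Fin n)))
    (hA : ∀ i, (A i).Nonempty) (hAc : ∀ i, IsCompact (A i)) (hAv : ∀ i, Convex ℝ (A i))
    (hB : ∀ j, (B j).Nonempty) (hBc : ∀ j, IsCompact (B j)) (hBv : ∀ j, Convex ℝ (B j))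
    (R S : EuclideanSpace ℝ (Fin n) ≃ₗᵢ[ℝ] EuclideanSpace ℝ (Fin n)) (p d : EuclideanSpace ℝ (Fin n)) (γ : ℝ) :
    sd ((fun x => R x + p) '' convexHull ℝ (⋃ i, A i))
       ((fun x => S x + d) '' convexHull ℝ (⋃ j, B j)) ≥ γ ↔
      ∃ (c : EuclideanSpace ℝ (Fin n)) (α β : ℝ), ‖c‖ = 1 ∧
        (∀ i, α ≤ costFn (A i) (R.symm c)) ∧
        (∀ j, β ≥ suppFn (B j) (S.symm c)) ∧
        γ ≤ α - β + ⟪c, p - d⟫ := by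
  have hCAc : IsCompact (convexHull ℝ (⋃ i, A i)) := isCompact_convexHull_iUnion A hA hAc hAv
  have hCBc : IsCompact (convexHull ℝ (⋃ j, B j)) := isCompact_convexHull_iUnion B hB hBc hBv
  have hCAne : (convexHull ℝ (⋃ i, A i)).Nonempty :=
    ⟨(hA ⟨0, hm⟩).some, subset_convexHull ℝ _ (Set.mem_iUnion.mpr ⟨⟨0, hm⟩, (hA _).some_mem⟩)⟩
  have hCBne : (convexHull ℝ (⋃ j, B j)).Nonempty :=
    ⟨(hB ⟨0, hk⟩).some, subset_convexHull ℝ _ (Set.mem_iUnion.mpr ⟨⟨0, hk⟩, (hB _).some_mem⟩)⟩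
  have hCAv : Convex ℝ (convexHull ℝ (⋃ i, A i)) := convex_convexHull ℝ _
  have hCBv : Convex ℝ (convexHull ℝ (⋃ j, B j)) := convex_convexHull ℝ _
  have hXne : ((fun x => R x + p) '' convexHull ℝ (⋃ i, A i)).Nonempty := hCAne.image _
  have hYne : ((fun x => S x + d) '' convexHull ℝ (⋃ j, B j)).Nonempty := hCBne.image _
  have hXc : IsCompact ((fun x => R x + p) '' convexHull ℝ (⋃ i, A i)) :=
    hCAc.image (R.continuous.add continuous_const)
  have hYc : IsCompact ((fun x => S x + d) '' convexHull ℝ (⋃ j, B j)) :=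
    hCBc.image (S.continuous.add continuous_const)
  have hXv : Convex ℝ ((fun x => R x + p) '' convexHull ℝ (⋃ i, A i)) := by
    have h3 := (hCAv.is_linear_image ⟨R.map_add, R.map_smul⟩).translate p
    rw [← Set.image_comp] at h3
    have h4 : ((fun z => p + z) ∘ fun x => R x) = fun x : EuclideanSpace ℝ (Fin n) => R x + p :=
      funext fun x => add_comm _ _
    rwa [h4] at h3
  have hYv : Convex ℝ ((fun x => S x + d) '' convexHull ℝ (⋃ j, B j)) := by
    have h3 := (hCBv.is_linear_image ⟨S.map_add, S.map_smul⟩).translate d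
    rw [← Set.image_comp] at h3
    have h4 : ((fun z => d + z) ∘ fun x => S x) = fun x : EuclideanSpace ℝ (Fin n) => S x + d :=
      funext fun x => add_comm _ _
    rwa [h4] at h3
  rw [sd_ge_iff hn hXne hYne hXc hYc hXv hYv γ]
  constructor
  · rintro ⟨c, hc1, hγ⟩
    refine ⟨c, costFn (convexHull ℝ (⋃ i, A i)) (R.symm c),
      suppFn (convexHull ℝ (⋃ j, B j)) (S.symm c), hc1, ?_, ?_, ?_⟩
    · exact (hull_cost hm A hA hAc hCAc (R.symm c) _).mpr le_rfl
    · exact (hull_supp hk B hB hBc hCBc (S.symm c) _).mpr le_rfl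
    · rw [costFn_image R p hCAne hCAc c, suppFn_image S d hCBne hCBc c] at hγ
      rw [inner_sub_right]
      linarith
  · rintro ⟨c, α, β, hc1, hα, hβ, hγ⟩
    refine ⟨c, hc1, ?_⟩
    rw [costFn_image R p hCAne hCAc c, suppFn_image S d hCBne hCBc c]
    have h1 : α ≤ costFn (convexHull ℝ (⋃ i, A i)) (R.symm c) :=
      (hull_cost hm A hA hAc hCAc (R.symm c) α).mp hα
    have h2 : suppFn (convexHull ℝ (⋃ j, B j)) (S.symm c) ≤ β :=
      (hull_supp hk B hB hBc hCBc (S.symm c) β).mp (fun j => hβ j)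
    rw [inner_sub_right] at hγ
    linarith
end

section
/- Sufficient condition for continuous (swept-volume) collision avoidance: let V₀, V₁, O₀, O₁ ⊆ ℝⁿ be nonempty compact convex sets, r, w ≥ 0, and suppose the swept sets satisfy SV_V ⊆ conv(V₀ ∪ V₁) ⊕ B_r and SV_O ⊆ conv(O₀ ∪ O₁) ⊕ B_w. If sd(conv(V₀ ∪ V₁), conv(O₀ ∪ O₁)) ≥ γ + r + w, then sd(SV_V, SV_O) ≥ γ. -/
open scoped RealInnerProductSpace Pointwise

lemma sep_lemma {n : ℕ} {A B : Set (EuclideanSpace ℝ (Fin n))}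
    (hA : A.Nonempty) (hB : B.Nonempty) (hAc : IsCompact A) (hBc : IsCompact B)
    (hAv : Convex ℝ A) (hBv : Convex ℝ B) (hd : Disjoint A B) :
    ∃ e : EuclideanSpace ℝ (Fin n), ‖e‖ = 1 ∧ ∃ a0 ∈ A, ∃ b0 ∈ B,
      ∀ a ∈ A, ∀ b ∈ B, ‖b0 - a0‖ ≤ ⟪e, b - a⟫ := by
  set K : Set (EuclideanSpace ℝ (Fin n)) := B - A with hK
  have hKne : K.Nonempty := hB.sub hA
  have hKc : IsCompact K := by rw [hK, sub_eq_add_neg]; exact hBc.add hAc.neg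
  have hKv : Convex ℝ K := hBv.sub hAv
  obtain ⟨v, hvK, hv⟩ := exists_norm_eq_iInf_of_complete_convex hKne
    hKc.isClosed.isComplete hKv 0
  have hproj := (norm_eq_iInf_iff_real_inner_le_zero hKv hvK).mp hv
  have hv0 : v ≠ 0 := by
    rintro rfl
    obtain ⟨b0, hb0, a0, ha0, hba⟩ := Set.mem_sub.mp hvK
    exact Set.disjoint_left.mp hd ((sub_eq_zero.mp hba).symm ▸ ha0) hb0
  have hvpos : 0 < ‖v‖ := norm_pos_iff.mpr hv0
  have hkey : ∀ k ∈ K, ‖v‖ ^ 2 ≤ ⟪v, k⟫ := by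
    intro k hk
    have h1 := hproj k hk
    have h2 : ⟪(0 : EuclideanSpace ℝ (Fin n)) - v, k - v⟫ = - ⟪v, k⟫ + ‖v‖ ^ 2 := by
      rw [zero_sub, inner_neg_left, inner_sub_right, real_inner_self_eq_norm_sq]
      ring
    rw [h2] at h1
    linarith
  obtain ⟨b0, hb0, a0, ha0, hba⟩ := Set.mem_sub.mp hvK
  refine ⟨‖v‖⁻¹ • v, ?_, a0, ha0, b0, hb0, ?_⟩
  · rw [norm_smul, Real.norm_eq_abs, abs_of_pos (inv_pos.mpr hvpos), inv_mul_cancel₀ hvpos.ne']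
  · intro a ha b hb
    have hk : b - a ∈ K := Set.sub_mem_sub hb ha
    have h3 : ‖v‖⁻¹ * ‖v‖ ^ 2 ≤ ‖v‖⁻¹ * ⟪v, b - a⟫ :=
      mul_le_mul_of_nonneg_left (hkey _ hk) (inv_nonneg.mpr hvpos.le)
    have hid : ‖v‖⁻¹ * ‖v‖ ^ 2 = ‖v‖ := by field_simp
    rw [hba, real_inner_smul_left]
    linarith

open Set in
lemma isCompact_convexJoin {n : ℕ} {s t : Set (EuclideanSpace ℝ (Fin n))}
    (hs : IsCompact s) (ht : IsCompact t) : IsCompact (convexJoin ℝ s t) := by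
  have heq : convexJoin ℝ s t =
      (fun p : EuclideanSpace ℝ (Fin n) × EuclideanSpace ℝ (Fin n) × ℝ =>
        (1 - p.2.2) • p.1 + p.2.2 • p.2.1) '' (s ×ˢ t ×ˢ Icc (0:ℝ) 1) := by
    ext x
    simp only [mem_convexJoin, mem_image, mem_prod, Prod.exists]
    constructor
    · rintro ⟨a, ha, b, hb, hx⟩
      rw [segment_eq_image ℝ] at hx
      obtain ⟨θ, hθ, hx⟩ := hx
      exact ⟨a, b, θ, ⟨ha, hb, hθ⟩, hx⟩
    · rintro ⟨a, b, θ, ⟨ha, hb, hθ⟩, hx⟩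
      refine ⟨a, ha, b, hb, ?_⟩
      rw [segment_eq_image ℝ]
      exact ⟨θ, hθ, hx⟩
  rw [heq]
  exact ((hs.prod (ht.prod isCompact_Icc))).image (by fun_prop)

lemma sd_of_disjoint {n : ℕ} {C D : Set (EuclideanSpace ℝ (Fin n))} (h : Disjoint C D) :
    sd C D = sInf {r | ∃ x ∈ C, ∃ y ∈ D, r = ‖x - y‖} := by
  rw [sd, if_pos h]

lemma sd_of_not_disjoint {n : ℕ} {C D : Set (EuclideanSpace ℝ (Fin n))} (h : ¬ Disjoint C D) :
    sd C D = - sInf {r | ∃ t : EuclideanSpace ℝ (Fin n), ‖t‖ = r ∧ Disjoint ((· + t) '' C) D} := by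
  rw [sd, if_neg h]

theorem swept_volume_sufficient {n : ℕ}
    (V₀ V₁ O₀ O₁ SVV SVO : Set (EuclideanSpace ℝ (Fin n)))
    (hV₀ : V₀.Nonempty) (hV₁ : V₁.Nonempty) (hO₀ : O₀.Nonempty) (hO₁ : O₁.Nonempty)
    (hV₀c : IsCompact V₀) (hV₁c : IsCompact V₁) (hO₀c : IsCompact O₀) (hO₁c : IsCompact O₁)
    (hV₀v : Convex ℝ V₀) (hV₁v : Convex ℝ V₁) (hO₀v : Convex ℝ O₀) (hO₁v : Convex ℝ O₁)
    (hSVV : SVV.Nonempty) (hSVO : SVO.Nonempty)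
    (hSVVb : Bornology.IsBounded SVV) (hSVOb : Bornology.IsBounded SVO)
    (r w γ : ℝ) (hr : 0 ≤ r) (hw : 0 ≤ w)
    (hsubV : SVV ⊆ convexHull ℝ (V₀ ∪ V₁) + Metric.closedBall (0 : EuclideanSpace ℝ (Fin n)) r)
    (hsubO : SVO ⊆ convexHull ℝ (O₀ ∪ O₁) + Metric.closedBall (0 : EuclideanSpace ℝ (Fin n)) w)
    (h : sd (convexHull ℝ (V₀ ∪ V₁)) (convexHull ℝ (O₀ ∪ O₁)) ≥ γ + r + w) :
    sd SVV SVO ≥ γ := by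
  classical
  set CV := convexHull ℝ (V₀ ∪ V₁) with hCVdef
  set CO := convexHull ℝ (O₀ ∪ O₁) with hCOdef
  have hCVne : CV.Nonempty := hV₀.mono (Set.subset_union_left.trans (subset_convexHull ℝ _))
  have hCOne : CO.Nonempty := hO₀.mono (Set.subset_union_left.trans (subset_convexHull ℝ _))
  have hCVv : Convex ℝ CV := convex_convexHull ℝ _
  have hCOv : Convex ℝ CO := convex_convexHull ℝ _
  have hCVc : IsCompact CV := by
    rw [hCVdef, hV₀v.convexHull_union hV₁v hV₀ hV₁]
    exact isCompact_convexJoin hV₀c hV₁c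
  have hCOc : IsCompact CO := by
    rw [hCOdef, hO₀v.convexHull_union hO₁v hO₀ hO₁]
    exact isCompact_convexJoin hO₀c hO₁c
  have decV : ∀ x ∈ SVV, ∃ a ∈ CV, ∃ u, ‖u‖ ≤ r ∧ x = a + u := by
    intro x hx
    obtain ⟨a, ha, u, hu, hxe⟩ := Set.mem_add.mp (hsubV hx)
    exact ⟨a, ha, u, mem_closedBall_zero_iff.mp hu, hxe.symm⟩
  have decO : ∀ y ∈ SVO, ∃ b ∈ CO, ∃ v, ‖v‖ ≤ w ∧ y = b + v := by
    intro y hy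
    obtain ⟨b, hb, v, hv, hye⟩ := Set.mem_add.mp (hsubO hy)
    exact ⟨b, hb, v, mem_closedBall_zero_iff.mp hv, hye.symm⟩
  have bddD : ∀ (C D : Set (EuclideanSpace ℝ (Fin n))),
      BddBelow {ρ | ∃ x ∈ C, ∃ y ∈ D, ρ = ‖x - y‖} := by
    intro C D
    exact ⟨0, by rintro ρ ⟨x, _, y, _, rfl⟩; exact norm_nonneg _⟩
  have bddT : ∀ (C D : Set (EuclideanSpace ℝ (Fin n))),
      BddBelow {ρ | ∃ t, ‖t‖ = ρ ∧ Disjoint ((· + t) '' C) D} := by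
    intro C D
    exact ⟨0, by rintro ρ ⟨t, rfl, _⟩; exact norm_nonneg _⟩
  by_cases hdis : Disjoint SVV SVO
  · -- disjoint swept sets
    rw [ge_iff_le, sd_of_disjoint hdis]
    by_cases hCVO : Disjoint CV CO
    · rw [sd_of_disjoint hCVO] at h
      refine le_csInf ?_ ?_
      · obtain ⟨x, hx⟩ := hSVV
        obtain ⟨y, hy⟩ := hSVO
        exact ⟨‖x - y‖, x, hx, y, hy, rfl⟩
      · rintro ρ ⟨x, hx, y, hy, rfl⟩
        obtain ⟨a, ha, u, hu, rfl⟩ := decV x hx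
        obtain ⟨b, hb, v, hv, rfl⟩ := decO _ hy
        have h1 : sInf {ρ | ∃ x ∈ CV, ∃ y ∈ CO, ρ = ‖x - y‖} ≤ ‖a - b‖ :=
          csInf_le (bddD _ _) ⟨a, ha, b, hb, rfl⟩
        have h2 : ‖a - b‖ ≤ ‖a + u - (b + v)‖ + ‖u - v‖ := by
          calc ‖a - b‖ = ‖(a + u - (b + v)) - (u - v)‖ := by rw [show a - b = (a + u - (b + v)) - (u - v) by abel]
            _ ≤ _ := norm_sub_le _ _
        have h3 : ‖u - v‖ ≤ r + w := (norm_sub_le u v).trans (add_le_add hu hv)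
        linarith
    · rw [sd_of_not_disjoint hCVO] at h
      have h0 : 0 ≤ sInf {ρ | ∃ t, ‖t‖ = ρ ∧ Disjoint ((· + t) '' CV) CO} :=
        Real.sInf_nonneg (by rintro ρ ⟨t, rfl, _⟩; exact norm_nonneg _)
      refine le_csInf ?_ ?_
      · obtain ⟨x, hx⟩ := hSVV
        obtain ⟨y, hy⟩ := hSVO
        exact ⟨‖x - y‖, x, hx, y, hy, rfl⟩
      · rintro ρ ⟨x, hx, y, hy, rfl⟩
        have := norm_nonneg (x - y)
        linarith
  · -- overlapping swept sets
    rw [ge_iff_le, sd_of_not_disjoint hdis, le_neg]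
    obtain ⟨z, hzV, hzO⟩ := Set.not_disjoint_iff.mp hdis
    refine le_of_forall_pos_le_add ?_
    intro ε hε
    rcases subsingleton_or_nontrivial (EuclideanSpace ℝ (Fin n)) with hss | hnt
    · -- trivial space
      have hSempty : {ρ | ∃ t, ‖t‖ = ρ ∧ Disjoint ((· + t) '' SVV) SVO} = ∅ := by
        ext ρ
        simp only [Set.mem_setOf_eq, Set.mem_empty_iff_false, iff_false, not_exists]
        rintro t ⟨-, hdj⟩
        have hz : z + t ∈ SVO := by rwa [Subsingleton.elim (z + t) z]
        exact Set.disjoint_left.mp hdj ⟨z, hzV, rfl⟩ hz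
      have hCC : ¬ Disjoint CV CO := by
        rw [Set.not_disjoint_iff]
        obtain ⟨a, ha⟩ := hCVne
        obtain ⟨b, hb⟩ := hCOne
        exact ⟨a, ha, by rwa [Subsingleton.elim a b]⟩
      rw [sd_of_not_disjoint hCC] at h
      have h0 : 0 ≤ sInf {ρ | ∃ t, ‖t‖ = ρ ∧ Disjoint ((· + t) '' CV) CO} :=
        Real.sInf_nonneg (by rintro ρ ⟨t, rfl, _⟩; exact norm_nonneg _)
      rw [hSempty, Real.sInf_empty]
      linarith
    · by_cases hCVO : Disjoint CV CO
      · -- hulls disjoint, but swept sets overlap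
        obtain ⟨e, he1, a0, ha0, b0, hb0, hsep⟩ :=
          sep_lemma hCVne hCOne hCVc hCOc hCVv hCOv hCVO
        have he2 : ⟪e, e⟫ = 1 := by
          rw [real_inner_self_eq_norm_sq, he1]; norm_num
        have hδ : γ + r + w ≤ ‖b0 - a0‖ := by
          refine le_trans h ?_
          rw [sd_of_disjoint hCVO]
          exact csInf_le (bddD _ _) ⟨a0, ha0, b0, hb0, (norm_sub_rev a0 b0).symm⟩
        obtain ⟨a, ha, u, hu, hzu⟩ := decV z hzV
        obtain ⟨b, hb, v, hv, hzv⟩ := decO z hzO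
        have hγ0 : γ ≤ 0 := by
          have h8 := hsep a ha b hb
          have hba : b - a = u - v := by
            have h4 : a + u = b + v := by rw [← hzu, ← hzv]
            rw [sub_eq_sub_iff_add_eq_add, ← h4]; abel
          have h9 : ⟪e, b - a⟫ ≤ r + w := by
            calc ⟪e, b - a⟫ ≤ ‖e‖ * ‖b - a‖ := real_inner_le_norm _ _
              _ = ‖u - v‖ := by rw [he1, one_mul, hba]
              _ ≤ ‖u‖ + ‖v‖ := norm_sub_le _ _
              _ ≤ r + w := add_le_add hu hv
          linarith
        set c : ℝ := -γ + ε with hc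
        have hcpos : 0 < c := by simp only [hc]; linarith
        set t : EuclideanSpace ℝ (Fin n) := (-c) • e with ht
        have hnt : ‖t‖ = c := by
          rw [ht, norm_smul, Real.norm_eq_abs, abs_neg, abs_of_pos hcpos, he1, mul_one]
        have hdj : Disjoint ((· + t) '' SVV) SVO := by
          rw [Set.disjoint_left]
          rintro x ⟨x', hx', rfl⟩ hxO
          obtain ⟨a', ha', u', hu', hx'e⟩ := decV x' hx'
          obtain ⟨b', hb', v', hv', hxe⟩ := decO _ hxO
          have h5 : a' + u' + t = b' + v' := by rw [← hx'e]; exact hxe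
          have h5i := congrArg (fun y => ⟪e, y⟫) h5
          simp only [inner_add_right, ht, real_inner_smul_right, he2, mul_one] at h5i
          have h8 := hsep a' ha' b' hb'
          rw [inner_sub_right] at h8
          have hbu : |⟪e, u'⟫| ≤ r :=
            (abs_real_inner_le_norm e u').trans (by rw [he1, one_mul]; exact hu')
          have hbv : |⟪e, v'⟫| ≤ w :=
            (abs_real_inner_le_norm e v').trans (by rw [he1, one_mul]; exact hv')
          have hbu' := abs_le.mp hbu
          have hbv' := abs_le.mp hbv
          simp only [hc] at h5i hnt
          linarith [hδ, h8, h5i, hbu'.1, hbu'.2, hbv'.1, hbv'.2]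
        have hfin : sInf {ρ | ∃ t, ‖t‖ = ρ ∧ Disjoint ((· + t) '' SVV) SVO} ≤ ‖t‖ :=
          csInf_le (bddT _ _) ⟨t, rfl, hdj⟩
        rw [hnt] at hfin
        exact hfin
      · -- hulls overlap
        rw [sd_of_not_disjoint hCVO] at h
        set T := {ρ | ∃ t, ‖t‖ = ρ ∧ Disjoint ((· + t) '' CV) CO} with hTdef
        have hTne : T.Nonempty := by
          obtain ⟨x0, hx0⟩ := exists_ne (0 : EuclideanSpace ℝ (Fin n))
          have hx0n : 0 < ‖x0‖ := norm_pos_iff.mpr hx0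
          set e0 : EuclideanSpace ℝ (Fin n) := ‖x0‖⁻¹ • x0 with he0
          have he0n : ‖e0‖ = 1 := by
            rw [he0, norm_smul, Real.norm_eq_abs, abs_of_pos (inv_pos.mpr hx0n),
              inv_mul_cancel₀ hx0n.ne']
          obtain ⟨R₁, hR₁⟩ := hCVc.isBounded.subset_closedBall 0
          obtain ⟨R₂, hR₂⟩ := hCOc.isBounded.subset_closedBall 0
          have hR₁0 : 0 ≤ R₁ := by
            obtain ⟨a, ha⟩ := hCVne
            exact (norm_nonneg a).trans (mem_closedBall_zero_iff.mp (hR₁ ha))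
          have hR₂0 : 0 ≤ R₂ := by
            obtain ⟨b, hb⟩ := hCOne
            exact (norm_nonneg b).trans (mem_closedBall_zero_iff.mp (hR₂ hb))
          set t0 : EuclideanSpace ℝ (Fin n) := (R₁ + R₂ + 1) • e0 with ht0
          have hnt0 : ‖t0‖ = R₁ + R₂ + 1 := by
            rw [ht0, norm_smul, Real.norm_eq_abs, abs_of_pos (by linarith), he0n, mul_one]
          refine ⟨‖t0‖, t0, rfl, ?_⟩
          rw [Set.disjoint_left]
          rintro y ⟨a, ha, rfl⟩ hyO
          have h1 : ‖a‖ ≤ R₁ := mem_closedBall_zero_iff.mp (hR₁ ha)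
          have h2 : ‖a + t0‖ ≤ R₂ := mem_closedBall_zero_iff.mp (hR₂ hyO)
          have h3 : ‖t0‖ ≤ ‖a + t0‖ + ‖a‖ := by
            calc ‖t0‖ = ‖(a + t0) - a‖ := by rw [add_sub_cancel_left]
              _ ≤ _ := norm_sub_le _ _
          rw [hnt0] at h3
          linarith
        have hsInfT : sInf T ≤ -(γ + r + w) := by linarith
        obtain ⟨ρ, hρT, hρlt⟩ := Real.lt_sInf_add_pos hTne hε
        obtain ⟨t, htn, htdj⟩ := hρT
        have hAne : ((· + t) '' CV).Nonempty := hCVne.image _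
        have hAc : IsCompact ((· + t) '' CV) := hCVc.image (by fun_prop)
        have hAv : Convex ℝ ((· + t) '' CV) := by
          have himg : (· + t) '' CV = (fun x => t + x) '' CV :=
            Set.image_congr' (fun x => add_comm x t)
          rw [himg]
          exact hCVv.translate t
        obtain ⟨e, he1, a0, ha0, b0, hb0, hsep⟩ :=
          sep_lemma hAne hCOne hAc hCOc hAv hCOv htdj
        have he2 : ⟪e, e⟫ = 1 := by
          rw [real_inner_self_eq_norm_sq, he1]; norm_num
        have hδpos : 0 < ‖b0 - a0‖ := by
          rw [norm_sub_pos_iff]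
          intro heq
          exact Set.disjoint_left.mp htdj ha0 (heq ▸ hb0)
        set t' : EuclideanSpace ℝ (Fin n) := t + (-(r + w)) • e with ht'
        have hnt' : ‖t'‖ ≤ ρ + (r + w) := by
          calc ‖t'‖ ≤ ‖t‖ + ‖(-(r + w)) • e‖ := norm_add_le _ _
            _ = ρ + (r + w) := by
                rw [htn, norm_smul, Real.norm_eq_abs, abs_neg,
                  abs_of_nonneg (by linarith), he1, mul_one]
        have hdj : Disjoint ((· + t') '' SVV) SVO := by
          rw [Set.disjoint_left]
          rintro x ⟨x', hx', rfl⟩ hxO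
          obtain ⟨a', ha', u', hu', hx'e⟩ := decV x' hx'
          obtain ⟨b', hb', v', hv', hxe⟩ := decO _ hxO
          have h5 : a' + u' + t' = b' + v' := by rw [← hx'e]; exact hxe
          have h5i := congrArg (fun y => ⟪e, y⟫) h5
          simp only [ht', inner_add_right, real_inner_smul_right, he2, mul_one] at h5i
          have h8 := hsep (a' + t) ⟨a', ha', rfl⟩ b' hb'
          rw [inner_sub_right, inner_add_right] at h8
          have hbu : |⟪e, u'⟫| ≤ r :=
            (abs_real_inner_le_norm e u').trans (by rw [he1, one_mul]; exact hu')
          have hbv : |⟪e, v'⟫| ≤ w :=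
            (abs_real_inner_le_norm e v').trans (by rw [he1, one_mul]; exact hv')
          have hbu' := abs_le.mp hbu
          have hbv' := abs_le.mp hbv
          linarith [hδpos, h8, h5i, hbu'.1, hbu'.2, hbv'.1, hbv'.2]
        have hfin : sInf {ρ | ∃ t, ‖t‖ = ρ ∧ Disjoint ((· + t) '' SVV) SVO} ≤ ‖t'‖ :=
          csInf_le (bddT _ _) ⟨t', rfl, hdj⟩
        linarith
end
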